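/- Let d, n ≥ 2 and let f(x) = a·x^j + b·x^k be a homogeneous polynomial of degree d in n complex variables, where j ≠ k are multi-indices with |j| = |k| = d, a, b ∈ ℂ, and x^j = x₁^{j₁}⋯x_n^{j_n}. Set g(x) = |a|·x^j + |b|·x^k. Then ‖f‖_{σ,ℂ} = ‖g‖_{σ,ℂ} = ‖g‖_{σ,ℝ}, and there exists y ∈ ℝ^n with y ≥ 0 (componentwise), ‖y‖₂ = 1, and g(y) = ‖g‖_{σ,ℂ}. -/

import Mathlib

/-- The Euclidean (Hermitian) norm on `ℂⁿ`. -/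
noncomputable def euclNorm {n : ℕ} (x : Fin n → ℂ) : ℝ :=
  Real.sqrt (∑ i, ‖x i‖ ^ 2)

/-- The Euclidean norm on `ℝⁿ`. -/
noncomputable def euclNormR {n : ℕ} (x : Fin n → ℝ) : ℝ :=
  Real.sqrt (∑ i, x i ^ 2)

/-- The complex spectral norm of a function `f : ℂⁿ → ℂ`. -/
noncomputable def specC {n : ℕ} (f : (Fin n → ℂ) → ℂ) : ℝ :=
  sSup {r : ℝ | ∃ x : Fin n → ℂ, euclNorm x = 1 ∧ r = ‖f x‖}

/-- The real spectral norm of a function `f : ℝⁿ → ℝ`. -/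
noncomputable def specR {n : ℕ} (f : (Fin n → ℝ) → ℝ) : ℝ :=
  sSup {r : ℝ | ∃ x : Fin n → ℝ, euclNormR x = 1 ∧ r = |f x|}

/-- For `f = a x^j + b x^k` a sum of two distinct monomials of degree `d`, the complex
spectral norm of `f` equals that of `g = |a| x^j + |b| x^k`, which equals the real spectral
norm of `g` and is attained at a componentwise nonnegative unit vector. -/
theorem stmt17 {n d : ℕ} (hn : 2 ≤ n) (hd : 2 ≤ d) (j k : Fin n → ℕ) (hjk : j ≠ k)
    (hj : ∑ i, j i = d) (hk : ∑ i, k i = d) (a b : ℂ) :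
    specC (fun x : Fin n → ℂ => a * ∏ i, x i ^ j i + b * ∏ i, x i ^ k i) =
      specC (fun x : Fin n → ℂ =>
        (‖a‖ : ℂ) * ∏ i, x i ^ j i + (‖b‖ : ℂ) * ∏ i, x i ^ k i) ∧
    specC (fun x : Fin n → ℂ =>
        (‖a‖ : ℂ) * ∏ i, x i ^ j i + (‖b‖ : ℂ) * ∏ i, x i ^ k i) =
      specR (fun y : Fin n → ℝ =>
        ‖a‖ * ∏ i, y i ^ j i + ‖b‖ * ∏ i, y i ^ k i) ∧
    ∃ y : Fin n → ℝ, (∀ i, 0 ≤ y i) ∧ euclNormR y = 1 ∧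
      ‖a‖ * ∏ i, y i ^ j i + ‖b‖ * ∏ i, y i ^ k i =
        specC (fun x : Fin n → ℂ =>
          (‖a‖ : ℂ) * ∏ i, x i ^ j i + (‖b‖ : ℂ) * ∏ i, x i ^ k i) := by
  classical
  set A : ℝ := ‖a‖ with hAdef
  set B : ℝ := ‖b‖ with hBdef
  have hA : 0 ≤ A := norm_nonneg _
  have hB : 0 ≤ B := norm_nonneg _
  set h : (Fin n → ℝ) → ℝ := fun y => A * ∏ i, y i ^ j i + B * ∏ i, y i ^ k i with hhdef
  set K : Set (Fin n → ℝ) := {y | (∀ i, 0 ≤ y i) ∧ ∑ i, y i ^ 2 = 1} with hKdef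
  -- K is compact
  have hKclosed : IsClosed K := by
    have h1 : ({y : Fin n → ℝ | ∀ i, 0 ≤ y i}) = ⋂ i, {y | 0 ≤ y i} := by
      ext; simp [Set.mem_iInter]
    have h2 : IsClosed {y : Fin n → ℝ | ∀ i, 0 ≤ y i} := by
      rw [h1]; exact isClosed_iInter fun i => isClosed_le continuous_const (continuous_apply i)
    have h3 : IsClosed {y : Fin n → ℝ | ∑ i, y i ^ 2 = 1} :=
      isClosed_eq (by continuity) continuous_const
    exact h2.inter h3
  have hKbdd : Bornology.IsBounded K := by
    rw [Metric.isBounded_iff_subset_closedBall 0]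
    refine ⟨1, fun y hy => ?_⟩
    rw [Metric.mem_closedBall, dist_zero_right]
    rw [pi_norm_le_iff_of_nonneg zero_le_one]
    intro i
    rw [Real.norm_eq_abs, ← sq_le_one_iff_abs_le_one]
    calc y i ^ 2 ≤ ∑ i', y i' ^ 2 :=
          Finset.single_le_sum (fun i' _ => sq_nonneg (y i')) (Finset.mem_univ i)
      _ = 1 := hy.2
  have hKcompact : IsCompact K := Metric.isCompact_of_isClosed_isBounded hKclosed hKbdd
  have hKne : K.Nonempty := by
    refine ⟨fun i => if i = ⟨0, by omega⟩ then 1 else 0, fun i => by positivity, ?_⟩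
    have : ∀ i : Fin n, ((if i = ⟨0, by omega⟩ then (1:ℝ) else 0)) ^ 2
        = if i = ⟨0, by omega⟩ then 1 else 0 := by
      intro i; split_ifs <;> norm_num
    rw [Finset.sum_congr rfl fun i _ => this i, Finset.sum_ite_eq' Finset.univ]
    simp
  have hcont : Continuous h := by unfold h; fun_prop
  obtain ⟨y, hyK, hymax⟩ := hKcompact.exists_isMaxOn hKne hcont.continuousOn
  set M : ℝ := h y with hMdef
  have hM0 : 0 ≤ M := by
    have h1 : 0 ≤ ∏ i, y i ^ j i := Finset.prod_nonneg fun i _ => pow_nonneg (hyK.1 i) _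
    have h2 : 0 ≤ ∏ i, y i ^ k i := Finset.prod_nonneg fun i _ => pow_nonneg (hyK.1 i) _
    exact add_nonneg (mul_nonneg hA h1) (mul_nonneg hB h2)
  -- key upper bound, complex case
  have keyC : ∀ (c₁ c₂ : ℂ), ‖c₁‖ = A → ‖c₂‖ = B →
      ∀ x : Fin n → ℂ, euclNorm x = 1 →
      ‖c₁ * ∏ i, x i ^ j i + c₂ * ∏ i, x i ^ k i‖ ≤ M := by
    intro c₁ c₂ hc₁ hc₂ x hx
    have hzK : (fun i => ‖x i‖) ∈ K := by
      refine ⟨fun i => norm_nonneg _, ?_⟩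
      have := hx
      unfold euclNorm at this
      exact Real.sqrt_eq_one.mp this
    calc ‖c₁ * ∏ i, x i ^ j i + c₂ * ∏ i, x i ^ k i‖
        ≤ ‖c₁ * ∏ i, x i ^ j i‖ + ‖c₂ * ∏ i, x i ^ k i‖ :=
          norm_add_le _ _
      _ = h (fun i => ‖x i‖) := by
          simp [hhdef, norm_mul, norm_prod, norm_pow, hc₁, hc₂]
      _ ≤ M := hymax hzK
  -- key upper bound, real case
  have keyR : ∀ w : Fin n → ℝ, euclNormR w = 1 →
      |A * ∏ i, w i ^ j i + B * ∏ i, w i ^ k i| ≤ M := by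
    intro w hw
    have hzK : (fun i => |w i|) ∈ K := by
      refine ⟨fun i => abs_nonneg _, ?_⟩
      unfold euclNormR at hw
      have := Real.sqrt_eq_one.mp hw
      simpa [sq_abs] using this
    calc |A * ∏ i, w i ^ j i + B * ∏ i, w i ^ k i|
        ≤ |A * ∏ i, w i ^ j i| + |B * ∏ i, w i ^ k i| := abs_add_le _ _
      _ = h (fun i => |w i|) := by
          simp [hhdef, abs_mul, Finset.abs_prod, abs_pow, abs_of_nonneg hA, abs_of_nonneg hB]
      _ ≤ M := hymax hzK
  -- the real maximizer as a complex vector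
  have hynorm : euclNormR y = 1 := by
    unfold euclNormR; rw [hyK.2, Real.sqrt_one]
  set xc : Fin n → ℂ := fun i => (y i : ℂ) with hxcdef
  have hxcnorm : euclNorm xc = 1 := by
    unfold euclNorm
    have : ∀ i, ‖xc i‖ ^ 2 = y i ^ 2 := by
      intro i; rw [hxcdef]; simp [Complex.norm_real, sq_abs]
    rw [Finset.sum_congr rfl fun i _ => this i, hyK.2, Real.sqrt_one]
  have hgxc : ‖(A:ℂ) * ∏ i, xc i ^ j i + (B:ℂ) * ∏ i, xc i ^ k i‖ = M := by
    have : ((A:ℂ) * ∏ i, xc i ^ j i + (B:ℂ) * ∏ i, xc i ^ k i) = ((M : ℝ) : ℂ) := by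
      rw [hMdef, hhdef, hxcdef]; push_cast; ring
    rw [this, Complex.norm_real, Real.norm_eq_abs, abs_of_nonneg hM0]
  -- phase construction for f
  obtain ⟨i₀, hi₀⟩ : ∃ i, j i ≠ k i := Function.ne_iff.mp hjk
  have hm : (j i₀ : ℝ) - (k i₀ : ℝ) ≠ 0 := sub_ne_zero.mpr (by exact_mod_cast hi₀)
  set θ : ℝ := (Complex.arg b - Complex.arg a) / ((j i₀ : ℝ) - (k i₀ : ℝ)) with hθdef
  set c : ℂ := Complex.exp ((θ : ℂ) * Complex.I) with hcdef
  set xf : Fin n → ℂ := fun i => (y i : ℂ) * (if i = i₀ then c else 1) with hxfdef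
  have hcabs : ‖c‖ = 1 := Complex.norm_exp_ofReal_mul_I θ
  have hxfabs : ∀ i, ‖xf i‖ = y i := by
    intro i
    rw [hxfdef]
    simp only [norm_mul, Complex.norm_real, Real.norm_eq_abs, abs_of_nonneg (hyK.1 i)]
    split_ifs with hi
    · rw [hcabs, mul_one]
    · simp
  have hxfnorm : euclNorm xf = 1 := by
    unfold euclNorm
    rw [Finset.sum_congr rfl fun i _ => by rw [hxfabs i], hyK.2, Real.sqrt_one]
  have hprod : ∀ e : Fin n → ℕ, ∏ i, xf i ^ e i =
      ((∏ i, y i ^ e i : ℝ) : ℂ) * Complex.exp ((((e i₀ : ℝ) * θ : ℝ) : ℂ) * Complex.I) := by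
    intro e
    have h1 : ∀ i, xf i ^ e i = ((y i : ℂ)) ^ e i * (if i = i₀ then c ^ e i₀ else 1) := by
      intro i
      rw [hxfdef]
      simp only [mul_pow]
      congr 1
      split_ifs with hi
      · subst hi; rfl
      · exact one_pow _
    rw [Finset.prod_congr rfl fun i _ => h1 i, Finset.prod_mul_distrib,
      Finset.prod_ite_eq' Finset.univ i₀ fun _ => c ^ e i₀]
    simp only [Finset.mem_univ, if_true]
    congr 1
    · push_cast; ring
    · rw [hcdef, ← Complex.exp_nat_mul]
      congr 1
      push_cast; ring
  have hphase : Complex.arg b + (k i₀ : ℝ) * θ = Complex.arg a + (j i₀ : ℝ) * θ := by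
    rw [hθdef]; field_simp; ring
  have hexp : ∀ s t : ℝ, Complex.exp ((s : ℂ) * Complex.I) * Complex.exp ((t : ℂ) * Complex.I)
      = Complex.exp (((s + t : ℝ) : ℂ) * Complex.I) := by
    intro s t; rw [← Complex.exp_add]; push_cast; ring_nf
  have hfval : a * ∏ i, xf i ^ j i + b * ∏ i, xf i ^ k i =
      Complex.exp (((Complex.arg a + (j i₀ : ℝ) * θ : ℝ) : ℂ) * Complex.I) * ((M : ℝ) : ℂ) := by
    conv_lhs => rw [← Complex.norm_mul_exp_arg_mul_I a, ← Complex.norm_mul_exp_arg_mul_I b]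
    rw [hprod j, hprod k]
    have e1 : ((A:ℂ) * Complex.exp ((Complex.arg a : ℂ) * Complex.I)) *
        (((∏ i, y i ^ j i : ℝ) : ℂ) * Complex.exp ((((j i₀ : ℝ) * θ : ℝ) : ℂ) * Complex.I))
        = (A:ℂ) * ((∏ i, y i ^ j i : ℝ) : ℂ) *
          Complex.exp (((Complex.arg a + (j i₀ : ℝ) * θ : ℝ) : ℂ) * Complex.I) := by
      rw [← hexp]; ring
    have e2 : ((B:ℂ) * Complex.exp ((Complex.arg b : ℂ) * Complex.I)) *
        (((∏ i, y i ^ k i : ℝ) : ℂ) * Complex.exp ((((k i₀ : ℝ) * θ : ℝ) : ℂ) * Complex.I))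
        = (B:ℂ) * ((∏ i, y i ^ k i : ℝ) : ℂ) *
          Complex.exp (((Complex.arg b + (k i₀ : ℝ) * θ : ℝ) : ℂ) * Complex.I) := by
      rw [← hexp]; ring
    rw [e1, e2, hphase, hMdef, hhdef]
    push_cast
    ring
  have hfabs : ‖a * ∏ i, xf i ^ j i + b * ∏ i, xf i ^ k i‖ = M := by
    rw [hfval, norm_mul, Complex.norm_exp_ofReal_mul_I, Complex.norm_real, Real.norm_eq_abs,
      abs_of_nonneg hM0, one_mul]
  have hRval : |A * ∏ i, y i ^ j i + B * ∏ i, y i ^ k i| = M := by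
    rw [hMdef, hhdef, abs_of_nonneg hM0]
  -- conclude: each spectral norm equals M
  have habsA : ‖(A:ℂ)‖ = A := by rw [Complex.norm_real, Real.norm_eq_abs, abs_of_nonneg hA]
  have habsB : ‖(B:ℂ)‖ = B := by rw [Complex.norm_real, Real.norm_eq_abs, abs_of_nonneg hB]
  have eF : specC (fun x : Fin n → ℂ => a * ∏ i, x i ^ j i + b * ∏ i, x i ^ k i) = M := by
    unfold specC
    apply le_antisymm
    · refine csSup_le ⟨_, xc, hxcnorm, rfl⟩ ?_
      rintro r ⟨x, hx, rfl⟩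
      exact keyC a b rfl rfl x hx
    · refine le_csSup ⟨M, ?_⟩ ⟨xf, hxfnorm, hfabs.symm⟩
      rintro r ⟨x, hx, rfl⟩
      exact keyC a b rfl rfl x hx
  have eG : specC (fun x : Fin n → ℂ =>
      (A:ℂ) * ∏ i, x i ^ j i + (B:ℂ) * ∏ i, x i ^ k i) = M := by
    unfold specC
    apply le_antisymm
    · refine csSup_le ⟨_, xc, hxcnorm, rfl⟩ ?_
      rintro r ⟨x, hx, rfl⟩
      exact keyC _ _ habsA habsB x hx
    · refine le_csSup ⟨M, ?_⟩ ⟨xc, hxcnorm, hgxc.symm⟩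
      rintro r ⟨x, hx, rfl⟩
      exact keyC _ _ habsA habsB x hx
  have eR : specR (fun w : Fin n → ℝ =>
      A * ∏ i, w i ^ j i + B * ∏ i, w i ^ k i) = M := by
    unfold specR
    apply le_antisymm
    · refine csSup_le ⟨_, y, hynorm, rfl⟩ ?_
      rintro r ⟨w, hw, rfl⟩
      exact keyR w hw
    · refine le_csSup ⟨M, ?_⟩ ⟨y, hynorm, hRval.symm⟩
      rintro r ⟨w, hw, rfl⟩
      exact keyR w hw
  refine ⟨eF.trans eG.symm, eG.trans eR.symm, y, hyK.1, hynorm, ?_⟩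
  rw [eG, hMdef, hhdef]
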